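/- The bicycle equation ℓ·ṙ = −v + (v·r)r preserves the unit sphere: if ‖r(t₀)‖ = 1 then ‖r(t)‖ = 1 for all t where the solution is defined. -/

import Mathlib

open RealInnerProductSpace

/-- The bicycle equation preserves the unit sphere. -/
theorem bicycle_equation_preserves_unit_sphere
    {n : ℕ} (v r : ℝ → EuclideanSpace ℝ (Fin n)) (ℓ : ℝ) (hℓ : ℓ ≠ 0)
    (hv : Continuous v) (hr : Differentiable ℝ r)
    (hode : ∀ t, ℓ • deriv r t = -v t + ⟪v t, r t⟫ • r t)
    (t₀ : ℝ) (h0 : ‖r t₀‖ = 1) :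
    ∀ t, ‖r t‖ = 1 := by
  set φ : ℝ → ℝ := fun t => ⟪r t, r t⟫ with hφdef
  set g : ℝ → ℝ := fun t => (2 / ℓ) * ⟪v t, r t⟫ with hgdef
  have hg_cont : Continuous g := by
    exact continuous_const.mul (hv.inner hr.continuous)
  set G : ℝ → ℝ := fun t => ∫ s in t₀..t, g s with hGdef
  have hG : ∀ t, HasDerivAt G (g t) t := fun t =>
    (Continuous.integral_hasStrictDerivAt hg_cont t₀ t).hasDerivAt
  have key : ∀ A B C : ℝ, ℓ * A = -B + B * C → A = ℓ⁻¹ * B * (C - 1) := by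
    intro A B C h
    field_simp
    linear_combination h
  have hinner : ∀ t, ⟪deriv r t, r t⟫ = ℓ⁻¹ * ⟪v t, r t⟫ * (φ t - 1) := by
    intro t
    have h := congrArg (fun x => ⟪x, r t⟫) (hode t)
    simp only [inner_add_left, inner_neg_left, real_inner_smul_left] at h
    exact key _ _ _ h
  have hφ : ∀ t, HasDerivAt φ (g t * (φ t - 1)) t := by
    intro t
    have hd : HasDerivAt r (deriv r t) t := (hr t).hasDerivAt
    have h := hd.inner ℝ hd
    have hi := hinner t
    have hi' : ⟪r t, deriv r t⟫ = ℓ⁻¹ * ⟪v t, r t⟫ * (φ t - 1) := by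
      rw [real_inner_comm]; exact hi
    have heq : (⟪r t, deriv r t⟫ + ⟪deriv r t, r t⟫ : ℝ) = g t * (φ t - 1) := by
      rw [hi, hi', hgdef, div_eq_mul_inv]
      ring
    rw [heq] at h
    exact h
  set F : ℝ → ℝ := fun t => (φ t - 1) * Real.exp (-G t) with hFdef
  have hF : ∀ t, HasDerivAt F 0 t := by
    intro t
    have h := ((hφ t).sub_const 1).mul ((hG t).neg.exp)
    convert h using 1
    case e'_9 => ring
    all_goals rfl
  have hconst : ∀ t, F t = F t₀ := by
    intro t
    have : ∀ x, deriv F x = 0 := fun x => (hF x).deriv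
    exact is_const_of_deriv_eq_zero (fun x => (hF x).differentiableAt) this t t₀
  have hφ0 : φ t₀ = 1 := by
    simp only [hφdef, real_inner_self_eq_norm_sq, h0, one_pow]
  intro t
  have hFt : F t = 0 := by
    rw [hconst t]
    simp [hFdef, hφ0]
  have hexp : Real.exp (-G t) ≠ 0 := Real.exp_ne_zero _
  have hφt : φ t = 1 := by
    have := mul_eq_zero.mp hFt
    rcases this with h | h
    · linarith
    · exact absurd h hexp
  have : ‖r t‖ ^ 2 = 1 := by
    rw [← real_inner_self_eq_norm_sq]; exact hφt
  have h2 : (‖r t‖ - 1) * (‖r t‖ + 1) = 0 := by nlinarith [this]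
  rcases mul_eq_zero.mp h2 with h | h
  · linarith
  · nlinarith [norm_nonneg (r t)]
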